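/- For γ ∈ (0,1) the Legendre coefficients of the inverse multiquadric kernel are all strictly positive (they equal γ^d > 0), hence by Schoenberg's criterion the kernel K(x,y) = (1 − 2γ xᵀy + γ²)^{-1/2} is strictly positive definite on S²: for any distinct x_1,…,x_n ∈ S² and nonzero a ∈ ℝⁿ, Σ_{i,j} a_i a_j K(x_i,x_j) > 0. -/

import Mathlib

noncomputable section

/-- Euclidean 3-space. -/
abbrev E3 := EuclideanSpace ℝ (Fin 3)

/-- The unit sphere S² ⊂ ℝ³. -/
abbrev S2 := Metric.sphere (0 : E3) 1

/-- The geodesic distance `g(x,y) = arccos(xᵀy)` on the unit sphere. -/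
def geo (x y : S2) : ℝ := Real.arccos (inner ℝ (x : E3) (y : E3))

section ImqAux

open Finset
open scoped Nat

def FF (m : ℕ) : Finset (Fin m → Fin 3) := Fintype.piFinset (fun _ => (univ : Finset (Fin 3)))

lemma inner_expand (x y : E3) : (inner ℝ x y : ℝ) = ∑ t, x t * y t := by
  simp [PiLp.inner_apply, RCLike.inner_apply, mul_comm]

lemma inner_pow_expand (x y : E3) (m : ℕ) :
    (inner ℝ x y : ℝ) ^ m = ∑ f ∈ FF m, (∏ k, x (f k)) * (∏ k, y (f k)) := by
  rw [inner_expand, ← Fin.prod_const m (∑ t, x t * y t), Finset.prod_univ_sum]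
  exact Finset.sum_congr rfl fun f _ => by rw [← Finset.prod_mul_distrib]

lemma quad_pow {n : ℕ} (x : Fin n → E3) (a : Fin n → ℝ) (m : ℕ) :
    ∑ i, ∑ j, a i * a j * (inner ℝ (x i) (x j) : ℝ) ^ m
      = ∑ f ∈ FF m, (∑ i, a i * ∏ k, x i (f k)) ^ 2 := by
  have h : ∀ i j : Fin n, a i * a j * (inner ℝ (x i) (x j) : ℝ) ^ m
      = ∑ f ∈ FF m, (a i * ∏ k, x i (f k)) * (a j * ∏ k, x j (f k)) := by
    intro i j
    rw [inner_pow_expand, Finset.mul_sum]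
    exact Finset.sum_congr rfl fun f _ => by ring
  simp_rw [h]
  rw [show ∑ i, ∑ j, ∑ f ∈ FF m, (a i * ∏ k, x i (f k)) * (a j * ∏ k, x j (f k))
      = ∑ f ∈ FF m, ∑ i, ∑ j, (a i * ∏ k, x i (f k)) * (a j * ∏ k, x j (f k)) by
    calc ∑ i, ∑ j, ∑ f ∈ FF m, (a i * ∏ k, x i (f k)) * (a j * ∏ k, x j (f k))
        = ∑ i, ∑ f ∈ FF m, ∑ j, (a i * ∏ k, x i (f k)) * (a j * ∏ k, x j (f k)) :=
          Finset.sum_congr rfl fun i _ => Finset.sum_comm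
      _ = ∑ f ∈ FF m, ∑ i, ∑ j, (a i * ∏ k, x i (f k)) * (a j * ∏ k, x j (f k)) :=
          Finset.sum_comm]
  refine Finset.sum_congr rfl fun f _ => ?_
  rw [pow_two, Finset.sum_mul_sum univ univ (fun i => a i * ∏ k, x i (f k)) (fun j => a j * ∏ k, x j (f k))]

lemma sphere_norm (x : S2) : ‖(x : E3)‖ = 1 := by
  have := x.2
  rwa [mem_sphere_iff_norm, sub_zero] at this

lemma inner_le_one (x y : S2) : (inner ℝ (x : E3) (y : E3) : ℝ) ≤ 1 := by
  have := real_inner_le_norm (x : E3) (y : E3)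
  rwa [sphere_norm, sphere_norm, mul_one] at this

lemma abs_inner_le_one (x y : S2) : |(inner ℝ (x : E3) (y : E3) : ℝ)| ≤ 1 := by
  have := abs_real_inner_le_norm (x : E3) (y : E3)
  rwa [sphere_norm, sphere_norm, mul_one] at this

lemma inner_self_one (x : S2) : (inner ℝ (x : E3) (x : E3) : ℝ) = 1 := by
  rw [real_inner_self_eq_norm_sq, sphere_norm]; norm_num

lemma inner_lt_one {x y : S2} (h : x ≠ y) : (inner ℝ (x : E3) (y : E3) : ℝ) < 1 := by
  rcases lt_or_eq_of_le (inner_le_one x y) with h1 | h1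
  · exact h1
  · exfalso
    apply h
    have hn : ‖(x : E3) - (y : E3)‖ ^ 2 = 0 := by
      rw [norm_sub_sq_real, sphere_norm, sphere_norm, h1]; norm_num
    have : (x : E3) = (y : E3) := by
      have := pow_eq_zero_iff (n := 2) (by norm_num) |>.mp hn
      rwa [norm_eq_zero, sub_eq_zero] at this
    exact Subtype.ext this

lemma exists_pos_quad {n : ℕ} (x : Fin n → S2) (hx : Function.Injective x)
    (a : Fin n → ℝ) (j : Fin n) (haj : a j ≠ 0) :
    ∃ m : ℕ, 0 < ∑ i, ∑ i', a i * a i' * (inner ℝ (x i : E3) (x i' : E3) : ℝ) ^ m := by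
  by_contra hcon
  push_neg at hcon
  have hQ0 : ∀ m, ∑ i, ∑ i', a i * a i' * (inner ℝ (x i : E3) (x i' : E3) : ℝ) ^ m = 0 := by
    intro m
    refine le_antisymm (hcon m) ?_
    rw [quad_pow (fun i => (x i : E3)) a m]
    positivity
  have hc : ∀ m, ∀ f ∈ FF m, (∑ i, a i * ∏ k, (x i : E3) (f k)) = 0 := by
    intro m f hf
    have h0 := hQ0 m
    rw [quad_pow (fun i => (x i : E3)) a m] at h0
    have := (Finset.sum_eq_zero_iff_of_nonneg (fun g _ => sq_nonneg _)).mp h0 f hf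
    exact pow_eq_zero_iff (n := 2) (by norm_num) |>.mp this
  set v : Fin n → ℝ := fun i => (inner ℝ (x i : E3) (x j : E3) : ℝ) with hv
  have hmom : ∀ m : ℕ, ∑ i, a i * v i ^ m = 0 := by
    intro m
    calc ∑ i, a i * v i ^ m
        = ∑ i, ∑ f ∈ FF m, (a i * ∏ k, (x i : E3) (f k)) * ∏ k, (x j : E3) (f k) := by
          refine Finset.sum_congr rfl fun i _ => ?_
          rw [hv]
          simp only []
          rw [inner_pow_expand, Finset.mul_sum]
          exact Finset.sum_congr rfl fun f _ => by ring
      _ = ∑ f ∈ FF m, (∑ i, a i * ∏ k, (x i : E3) (f k)) * ∏ k, (x j : E3) (f k) := by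
          rw [Finset.sum_comm]
          exact Finset.sum_congr rfl fun f _ => (Finset.sum_mul _ _ _).symm
      _ = 0 := by
          refine Finset.sum_eq_zero fun f hf => ?_
          rw [hc m f hf, zero_mul]
  -- for r ∈ (0,1), ∑ i, a i * (1 - r * v i)⁻¹ = 0
  have hsum0 : ∀ r : ℝ, 0 < r → r < 1 → ∑ i, a i * (1 - r * v i)⁻¹ = 0 := by
    intro r hr0 hr1
    have hgeo : ∀ i : Fin n, HasSum (fun m : ℕ => a i * (r * v i) ^ m)
        (a i * (1 - r * v i)⁻¹) := by
      intro i
      refine (hasSum_geometric_of_norm_lt_one (K := ℝ) (ξ := r * v i) ?_).mul_left _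
      rw [Real.norm_eq_abs, abs_mul, abs_of_pos hr0]
      calc r * |v i| ≤ r * 1 := by
            exact mul_le_mul_of_nonneg_left (abs_inner_le_one _ _) hr0.le
        _ < 1 := by linarith
    have H : HasSum (fun m : ℕ => ∑ i, a i * (r * v i) ^ m)
        (∑ i, a i * (1 - r * v i)⁻¹) := hasSum_sum fun i _ => hgeo i
    have hz : (fun m : ℕ => ∑ i, a i * (r * v i) ^ m) = fun _ => (0 : ℝ) := by
      funext m
      calc ∑ i, a i * (r * v i) ^ m = r ^ m * ∑ i, a i * v i ^ m := by
            rw [Finset.mul_sum]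
            exact Finset.sum_congr rfl fun i _ => by rw [mul_pow]; ring
        _ = 0 := by rw [hmom m, mul_zero]
    rw [hz] at H
    exact (hasSum_zero.unique H).symm
  -- limit as r → 1⁻ of ∑ i, a i * ((1 - r) * (1 - r * v i)⁻¹) is a j, but the sum is 0
  set g : ℝ → ℝ := fun r => ∑ i, a i * ((1 - r) * (1 - r * v i)⁻¹) with hg
  have hglim : Filter.Tendsto g (nhdsWithin 1 (Set.Iio 1))
      (nhds (∑ i, if i = j then a i else 0)) := by
    rw [hg]
    refine tendsto_finset_sum _ fun i _ => ?_
    by_cases hij : i = j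
    · subst hij
      simp only [if_pos rfl]
      have hvj : v i = 1 := inner_self_one (x i)
      have hev : ∀ r ∈ Set.Iio (1 : ℝ), a i * ((1 - r) * (1 - r * v i)⁻¹) = a i := by
        intro r hr
        rw [hvj, mul_one, mul_inv_cancel₀ (by rw [Set.mem_Iio] at hr; intro h; apply hr.ne; linarith), mul_one]
      refine Filter.Tendsto.congr' ?_ tendsto_const_nhds
      filter_upwards [self_mem_nhdsWithin] with r hr
      exact (hev r hr).symm
    · simp only [if_neg hij]
      have hvi : v i < 1 := inner_lt_one (fun h => hij (hx h))
      have hden : Filter.Tendsto (fun r : ℝ => 1 - r * v i) (nhdsWithin 1 (Set.Iio 1))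
          (nhds (1 - v i)) := by
        have : Filter.Tendsto (fun r : ℝ => 1 - r * v i) (nhds 1) (nhds (1 - 1 * v i)) := by
          exact (continuous_const.sub (continuous_id.mul continuous_const)).tendsto 1
        rw [one_mul] at this
        exact this.mono_left nhdsWithin_le_nhds
      have hnum : Filter.Tendsto (fun r : ℝ => 1 - r) (nhdsWithin 1 (Set.Iio 1))
          (nhds 0) := by
        have : Filter.Tendsto (fun r : ℝ => 1 - r) (nhds 1) (nhds (1 - 1)) :=
          (continuous_const.sub continuous_id).tendsto 1
        rw [sub_self] at this
        exact this.mono_left nhdsWithin_le_nhds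
      have := (hnum.mul (hden.inv₀ (by intro h; rw [sub_eq_zero] at h; linarith))).const_mul (a i)
      simpa using this
  have hgz : g =ᶠ[nhdsWithin 1 (Set.Iio 1)] fun _ => 0 := by
    filter_upwards [Ioo_mem_nhdsLT_of_mem (show (1:ℝ) ∈ Set.Ioc (0:ℝ) 1 by constructor <;> norm_num)] with r hr
    rw [hg]
    simp only []
    calc ∑ i, a i * ((1 - r) * (1 - r * v i)⁻¹)
        = (1 - r) * ∑ i, a i * (1 - r * v i)⁻¹ := by
          rw [Finset.mul_sum]; exact Finset.sum_congr rfl fun i _ => by ring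
      _ = 0 := by rw [hsum0 r hr.1 hr.2, mul_zero]
  have h0 : Filter.Tendsto g (nhdsWithin 1 (Set.Iio 1)) (nhds 0) :=
    Filter.Tendsto.congr' hgz.symm tendsto_const_nhds
  have : (∑ i, if i = j then a i else 0) = 0 := tendsto_nhds_unique hglim h0
  rw [Finset.sum_ite_eq' univ j a] at this
  simp at this
  exact haj this

lemma gauss_pd {n : ℕ} (x : Fin n → S2) (hx : Function.Injective x)
    (a : Fin n → ℝ) (j : Fin n) (haj : a j ≠ 0) {c : ℝ} (hc : 0 < c) :
    0 < ∑ i, ∑ i', a i * a i' * Real.exp (c * (inner ℝ (x i : E3) (x i' : E3) : ℝ)) := by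
  obtain ⟨M, hM⟩ := exists_pos_quad x hx a j haj
  have hexp : ∀ u : ℝ, HasSum (fun m : ℕ => (c * u) ^ m / m !) (Real.exp (c * u)) := by
    intro u
    rw [Real.exp_eq_exp_ℝ]
    exact NormedSpace.expSeries_div_hasSum_exp (c * u)
  have H : HasSum
      (fun m : ℕ => ∑ i, ∑ i', a i * a i' * ((c * (inner ℝ (x i : E3) (x i' : E3) : ℝ)) ^ m / m !))
      (∑ i, ∑ i', a i * a i' * Real.exp (c * (inner ℝ (x i : E3) (x i' : E3) : ℝ))) :=
    hasSum_sum fun i _ => hasSum_sum fun i' _ => (hexp _).mul_left _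
  have hterm : ∀ m : ℕ,
      ∑ i, ∑ i', a i * a i' * ((c * (inner ℝ (x i : E3) (x i' : E3) : ℝ)) ^ m / m !)
        = (c ^ m / m !) * ∑ i, ∑ i', a i * a i' * (inner ℝ (x i : E3) (x i' : E3) : ℝ) ^ m := by
    intro m
    rw [Finset.mul_sum]
    refine Finset.sum_congr rfl fun i _ => ?_
    rw [Finset.mul_sum]
    refine Finset.sum_congr rfl fun i' _ => ?_
    rw [mul_pow]
    ring
  have hnonneg : ∀ m : ℕ, 0 ≤ ∑ i, ∑ i',
      a i * a i' * ((c * (inner ℝ (x i : E3) (x i' : E3) : ℝ)) ^ m / m !) := by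
    intro m
    rw [hterm m]
    have h1 : (0:ℝ) ≤ c ^ m / m ! := by positivity
    have h2 : (0:ℝ) ≤ ∑ i, ∑ i', a i * a i' * (inner ℝ (x i : E3) (x i' : E3) : ℝ) ^ m := by
      rw [quad_pow (fun i => (x i : E3)) a m]
      positivity
    exact mul_nonneg h1 h2
  have hMpos : 0 < ∑ i, ∑ i',
      a i * a i' * ((c * (inner ℝ (x i : E3) (x i' : E3) : ℝ)) ^ M / M !) := by
    rw [hterm M]
    exact mul_pos (by positivity) hM
  calc (0:ℝ) < ∑ i, ∑ i', a i * a i' * ((c * (inner ℝ (x i : E3) (x i' : E3) : ℝ)) ^ M / M !) := hMpos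
    _ ≤ _ := le_hasSum H M fun m _ => hnonneg m

lemma inv_sqrt_eq_integral {q : ℝ} (hq : 0 < q) :
    (Real.sqrt q)⁻¹
      = (2 / Real.sqrt Real.pi) * ∫ t in Set.Ioi (0:ℝ), Real.exp (-q * t ^ 2) := by
  rw [integral_gaussian_Ioi q, Real.sqrt_div Real.pi_pos.le q]
  have hπ : Real.sqrt Real.pi ≠ 0 := (Real.sqrt_pos.mpr Real.pi_pos).ne'
  have hq' : Real.sqrt q ≠ 0 := (Real.sqrt_pos.mpr hq).ne'
  field_simp

lemma main_pd (γ : ℝ) (hγ0 : 0 < γ) (hγ1 : γ < 1) (n : ℕ) (x : Fin n → S2)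
    (hx : Function.Injective x) (a : Fin n → ℝ) (ha : a ≠ 0) :
    0 < ∑ i, ∑ j, a i * a j *
        (Real.sqrt (1 - 2 * γ * (inner ℝ (x i : E3) (x j : E3) : ℝ) + γ ^ 2))⁻¹ := by
  obtain ⟨j, haj⟩ : ∃ j, a j ≠ 0 := Function.ne_iff.mp ha
  have hq : ∀ i j', 0 < 1 - 2 * γ * (inner ℝ (x i : E3) (x j' : E3) : ℝ) + γ ^ 2 := by
    intro i j'
    have h1 : (inner ℝ (x i : E3) (x j' : E3) : ℝ) ≤ 1 := inner_le_one _ _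
    have h2 : 2 * γ * (inner ℝ (x i : E3) (x j' : E3) : ℝ) ≤ 2 * γ := by nlinarith
    nlinarith [sq_nonneg (1 - γ)]
  set Q : ℝ → ℝ := fun t => ∑ i, ∑ j', a i * a j' *
      Real.exp (-(1 - 2 * γ * (inner ℝ (x i : E3) (x j' : E3) : ℝ) + γ ^ 2) * t ^ 2) with hQdef
  have hint : ∀ i j', MeasureTheory.IntegrableOn
      (fun t : ℝ => a i * a j' *
        Real.exp (-(1 - 2 * γ * (inner ℝ (x i : E3) (x j' : E3) : ℝ) + γ ^ 2) * t ^ 2))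
      (Set.Ioi 0) := fun i j' =>
    ((integrable_exp_neg_mul_sq (hq i j')).integrableOn).const_mul _
  have hQint : MeasureTheory.IntegrableOn Q (Set.Ioi 0) := by
    refine MeasureTheory.integrable_finset_sum _ fun i _ => ?_
    exact MeasureTheory.integrable_finset_sum _ fun j' _ => hint i j'
  have hQpos : ∀ t ∈ Set.Ioi (0:ℝ), 0 < Q t := by
    intro t ht
    rw [Set.mem_Ioi] at ht
    have hc : 0 < 2 * γ * t ^ 2 := by positivity
    have hS := gauss_pd x hx a j haj hc
    have hfac : ∀ i j', a i * a j' *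
        Real.exp (-(1 - 2 * γ * (inner ℝ (x i : E3) (x j' : E3) : ℝ) + γ ^ 2) * t ^ 2)
        = Real.exp (-(1 + γ ^ 2) * t ^ 2) *
          (a i * a j' * Real.exp (2 * γ * t ^ 2 * (inner ℝ (x i : E3) (x j' : E3) : ℝ))) := by
      intro i j'
      rw [show -(1 - 2 * γ * (inner ℝ (x i : E3) (x j' : E3) : ℝ) + γ ^ 2) * t ^ 2
          = -(1 + γ ^ 2) * t ^ 2 + 2 * γ * t ^ 2 * (inner ℝ (x i : E3) (x j' : E3) : ℝ) by ring,
        Real.exp_add]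
      ring
    have : Q t = Real.exp (-(1 + γ ^ 2) * t ^ 2) *
        ∑ i, ∑ j', a i * a j' * Real.exp (2 * γ * t ^ 2 * (inner ℝ (x i : E3) (x j' : E3) : ℝ)) := by
      rw [hQdef]
      simp only []
      rw [Finset.mul_sum]
      refine Finset.sum_congr rfl fun i _ => ?_
      rw [Finset.mul_sum]
      exact Finset.sum_congr rfl fun j' _ => hfac i j'
    rw [this]
    exact mul_pos (Real.exp_pos _) hS
  have h0 : 0 < ∫ t in Set.Ioi (0:ℝ), Q t := by
    rw [MeasureTheory.setIntegral_pos_iff_support_of_nonneg_ae ?_ hQint]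
    · have hsub : Set.Ioi (0:ℝ) ⊆ Function.support Q ∩ Set.Ioi 0 :=
        fun t ht => ⟨(hQpos t ht).ne', ht⟩
      refine lt_of_lt_of_le ?_ (MeasureTheory.measure_mono hsub)
      rw [Real.volume_Ioi]
      norm_num
    · filter_upwards [MeasureTheory.ae_restrict_mem measurableSet_Ioi] with t ht
      exact (hQpos t ht).le
  have key : ∀ i j', a i * a j' *
      (Real.sqrt (1 - 2 * γ * (inner ℝ (x i : E3) (x j' : E3) : ℝ) + γ ^ 2))⁻¹
      = (2 / Real.sqrt Real.pi) * ∫ t in Set.Ioi (0:ℝ), a i * a j' *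
          Real.exp (-(1 - 2 * γ * (inner ℝ (x i : E3) (x j' : E3) : ℝ) + γ ^ 2) * t ^ 2) := by
    intro i j'
    rw [MeasureTheory.integral_const_mul, inv_sqrt_eq_integral (hq i j')]
    ring
  calc ∑ i, ∑ j', a i * a j' *
        (Real.sqrt (1 - 2 * γ * (inner ℝ (x i : E3) (x j' : E3) : ℝ) + γ ^ 2))⁻¹
      = (2 / Real.sqrt Real.pi) * ∫ t in Set.Ioi (0:ℝ), Q t := by
        simp_rw [key]
        simp_rw [← Finset.mul_sum]
        congr 1
        rw [hQdef]
        rw [MeasureTheory.integral_finset_sum _ fun i _ =>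
          MeasureTheory.integrable_finset_sum _ fun j' _ => hint i j']
        exact Finset.sum_congr rfl fun i _ =>
          (MeasureTheory.integral_finset_sum _ fun j' _ => hint i j').symm
    _ > 0 := mul_pos (div_pos two_pos (Real.sqrt_pos.mpr Real.pi_pos)) h0


end ImqAux

/-- for `γ ∈ (0,1)` the Legendre coefficients `γ^d` of the inverse
multiquadric kernel are all strictly positive, hence (Schoenberg's criterion) the kernel
`K(x,y) = (1 − 2γ xᵀy + γ²)^{-1/2}` is strictly positive definite on `S²`. -/
theorem imq_strictly_positive_definite (γ : ℝ) (hγ : γ ∈ Set.Ioo (0 : ℝ) 1) :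
    (∀ d : ℕ, 0 < γ ^ d) ∧
    (∀ (n : ℕ) (x : Fin n → S2), Function.Injective x →
      ∀ a : Fin n → ℝ, a ≠ 0 →
        0 < ∑ i, ∑ j, a i * a j *
          (Real.sqrt (1 - 2 * γ * (inner ℝ (x i : E3) (x j : E3) : ℝ) + γ ^ 2))⁻¹) := by
  obtain ⟨hγ0, hγ1⟩ := hγ
  exact ⟨fun d => pow_pos hγ0 d,
    fun n x hx a ha => main_pd γ hγ0 hγ1 n x hx a ha⟩
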